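/- Let C be a finite poset that is Newtonian (every element of level k is above every element of level k−1). Then for every n ≤ |C|, any two downward-closed subsets of C of cardinality n are order-isomorphic. -/

import Mathlib

/-- The level of `x`: the cardinality of the longest chain with maximal element `x`. -/
noncomputable def level {α : Type*} [PartialOrder α] (x : α) : ℕ∞ :=
  Set.chainHeight {y | y ≤ x} (· < ·)

lemma chainHeight_ne_top_of_fintype {α : Type*} [PartialOrder α] [Fintype α] (s : Set α) :
    s.chainHeight (· < ·) ≠ ⊤ := by
  exact Set.chainHeight_ne_top_of_finite _ _ s.toFinite

lemma level_ne_top {α : Type*} [PartialOrder α] [Fintype α] (x : α) : level x ≠ ⊤ :=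
  chainHeight_ne_top_of_fintype _

lemma level_strictMono {α : Type*} [PartialOrder α] [Fintype α] {x y : α} (h : x < y) :
    level x < level y := by
  have hins : level x + 1 ≤ (insert y {z | z ≤ x}).chainHeight (· < ·) := by
    obtain ⟨t, hts, htc, hchain⟩ :=
      Set.exists_eq_chainHeight_of_finite {z | z ≤ x} (· < ·) (Set.toFinite _)
    have hyt : y ∉ t := fun hy => lt_irrefl x (lt_of_lt_of_le h (show y ≤ x from hts hy))
    rw [level, ← htc, ← Set.encard_insert_of_notMem hyt]
    exact Set.encard_le_chainHeight_of_isChain _ _ (Set.insert_subset_insert hts)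
      (hchain.insert fun b hb _ => Or.inr (lt_of_le_of_lt (hts hb) h))
  have hsub : insert y {z | z ≤ x} ⊆ {z | z ≤ y} := by
    intro z hz
    rcases hz with rfl | hz
    · exact le_refl z
    · exact le_trans hz h.le
  have : level x + 1 ≤ level y := le_trans hins (Set.chainHeight_mono _ _ _ hsub)
  exact lt_of_lt_of_le (by
    rw [ENat.lt_add_one_iff (level_ne_top x)]) this

/-- In a finite Newtonian poset, any two downward-closed subsets of the same
cardinality `n ≤ |C|` are order-isomorphic. -/
theorem newtonian_implies_stems_iso
    {α : Type} [PartialOrder α] [Fintype α]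
    (hN : ∀ x y : α, level y < level x → y < x)
    (n : ℕ) (hn : n ≤ Fintype.card α)
    (S T : Set α) (hS : IsLowerSet S) (hT : IsLowerSet T)
    (hSc : S.ncard = n) (hTc : T.ncard = n) :
    Nonempty (S ≃o T) := by
  classical
  -- order is determined by levels
  have hle : ∀ x y : α, x ≤ y ↔ x = y ∨ level x < level y := by
    intro x y
    constructor
    · intro h
      rcases eq_or_lt_of_le h with rfl | h
      · exact Or.inl rfl
      · exact Or.inr (level_strictMono h)
    · rintro (rfl | h)
      · exact le_refl x
      · exact (hN y x h).le
  -- the counting lemma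
  have key : ∀ (B : Set α), (∀ b s, b ∈ B → s ∉ B → level b < level s) →
      ∀ (U : Set α), IsLowerSet U → U.ncard = n → (U ∩ B).ncard = min n B.ncard := by
    intro B hB U hLU hUc
    by_cases hBU : B ⊆ U
    · rw [Set.inter_eq_self_of_subset_right hBU]
      have : B.ncard ≤ n := hUc ▸ Set.ncard_le_ncard hBU U.toFinite
      omega
    · obtain ⟨b, hbB, hbU⟩ := Set.not_subset.mp hBU
      have hUB : U ⊆ B := by
        intro s hs
        by_contra hsB
        exact hbU (hLU (hN s b (hB b s hbB hsB)).le hs)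
      rw [Set.inter_eq_self_of_subset_left hUB, hUc]
      have : n ≤ B.ncard := hUc ▸ Set.ncard_le_ncard hUB B.toFinite
      omega
  -- fibers of the level function over lower sets have determined cardinality
  have fib : ∀ (U : Set α), IsLowerSet U → U.ncard = n → ∀ c : ℕ∞,
      {x ∈ U | level (x : α) = c}.ncard
        = min n {x : α | level x ≤ c}.ncard - min n {x : α | level x < c}.ncard := by
    intro U hLU hUc c
    have hBle : ∀ b s : α, b ∈ {x : α | level x ≤ c} → s ∉ {x : α | level x ≤ c} →
        level b < level s := fun b s hb hs => lt_of_le_of_lt hb (not_le.mp hs)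
    have hBlt : ∀ b s : α, b ∈ {x : α | level x < c} → s ∉ {x : α | level x < c} →
        level b < level s := fun b s hb hs => lt_of_lt_of_le hb (not_lt.mp hs)
    have hdecomp : U ∩ {x : α | level x ≤ c} = (U ∩ {x : α | level x < c}) ∪ {x ∈ U | level (x : α) = c} := by
      ext x
      simp only [Set.mem_inter_iff, Set.mem_union, Set.mem_setOf_eq, Set.mem_sep_iff]
      constructor
      · rintro ⟨hxU, hxc⟩
        rcases lt_or_eq_of_le hxc with h | h
        · exact Or.inl ⟨hxU, h⟩
        · exact Or.inr ⟨hxU, h⟩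
      · rintro (⟨hxU, h⟩ | ⟨hxU, h⟩)
        · exact ⟨hxU, h.le⟩
        · exact ⟨hxU, h.le⟩
    have hdisj : Disjoint (U ∩ {x : α | level x < c}) {x ∈ U | level (x : α) = c} := by
      rw [Set.disjoint_left]
      rintro x ⟨_, hlt⟩ ⟨_, heq⟩
      exact absurd heq hlt.ne
    have := key _ hBle U hLU hUc
    rw [hdecomp, Set.ncard_union_eq hdisj (Set.toFinite _) (Set.toFinite _),
      key _ hBlt U hLU hUc] at this
    omega
  -- fibers of S and T over each level value are equicardinal
  have card_fib : ∀ c : ℕ∞,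
      Nat.card {a : S // level a.1 = c} = Nat.card {a : T // level a.1 = c} := by
    intro c
    have eS : {a : S // level a.1 = c} ≃ {x // x ∈ S ∧ level x = c} :=
      Equiv.subtypeSubtypeEquivSubtypeInter (· ∈ S) (fun x => level x = c)
    have eT : {a : T // level a.1 = c} ≃ {x // x ∈ T ∧ level x = c} :=
      Equiv.subtypeSubtypeEquivSubtypeInter (· ∈ T) (fun x => level x = c)
    rw [Nat.card_congr eS, Nat.card_congr eT]
    have h1 : Nat.card {x // x ∈ S ∧ level x = c} = {x ∈ S | level x = c}.ncard :=
      Nat.card_coe_set_eq _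
    have h2 : Nat.card {x // x ∈ T ∧ level x = c} = {x ∈ T | level x = c}.ncard :=
      Nat.card_coe_set_eq _
    rw [h1, h2, fib S hS hSc c, fib T hT hTc c]
  -- build a level-preserving bijection
  have fibEquiv : ∀ c : ℕ∞, {a : S // level a.1 = c} ≃ {a : T // level a.1 = c} := by
    intro c
    have h1 : Finite {a : S // level a.1 = c} := inferInstance
    have h2 : Finite {a : T // level a.1 = c} := inferInstance
    have f1 : Fintype {a : S // level a.1 = c} := Fintype.ofFinite _
    have f2 : Fintype {a : T // level a.1 = c} := Fintype.ofFinite _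
    apply Fintype.equivOfCardEq
    rw [← Nat.card_eq_fintype_card, ← Nat.card_eq_fintype_card]
    exact card_fib c
  let e : S ≃ T := Equiv.ofFiberEquiv (f := fun a : S => level a.1)
    (g := fun a : T => level a.1) fibEquiv
  have he : ∀ a : S, level (e a).1 = level a.1 := fun a => Equiv.ofFiberEquiv_map fibEquiv a
  refine ⟨⟨e, ?_⟩⟩
  intro a b
  show (e a : α) ≤ (e b : α) ↔ (a : α) ≤ (b : α)
  rw [hle, hle, he, he]
  have : (e a : α) = (e b : α) ↔ (a : α) = (b : α) := by
    constructor
    · intro h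
      exact congrArg _ (e.injective (Subtype.ext h))
    · intro h
      exact congrArg _ (congrArg e (Subtype.ext h))
  rw [this]
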